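/- The truncated series identity: for every m ≥ 1 and n ≤ 2^m − 1 (equivalently, for n with Ω-bounded divisor chains), κ_x(n) = Σ_{j=1}^{m} (1^{*(j-1)} * id_x)(n) / 2^j + (1^{*m} * κ_x)(n) / 2^m, where 1^{*j} denotes the j-fold Dirichlet convolution of the constant function 1 with itself (1^{*0} = ε). -/

import Mathlib

open Finset

/-- Recursive divisor function: κ_x(n) = n^x + Σ_{d|n, d<n} κ_x(d). -/
noncomputable def kappa (x : ℂ) (n : ℕ) : ℂ :=
  (n : ℂ) ^ x + ∑ d ∈ n.properDivisors.attach, kappa x d.1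
termination_by n
decreasing_by exact (Nat.mem_properDivisors.mp d.2).2

/-- Number of ordered factorizations: K(n) = ε(n) + Σ_{d|n, d<n} K(d). -/
def Kfac (n : ℕ) : ℕ :=
  (if n = 1 then 1 else 0) + ∑ d ∈ n.properDivisors.attach, Kfac d.1
termination_by n
decreasing_by exact (Nat.mem_properDivisors.mp d.2).2

/-- Divisor power sum σ_x(n) = Σ_{d|n} d^x. -/
noncomputable def sigmaC (x : ℂ) (n : ℕ) : ℂ := ∑ d ∈ n.divisors, (d : ℂ) ^ x

/-- Jordan's totient J_x = μ * id_x. -/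
noncomputable def jordan (x : ℂ) (n : ℕ) : ℂ :=
  ∑ d ∈ n.divisors, (ArithmeticFunction.moebius d : ℂ) * ((n / d : ℕ) : ℂ) ^ x

/-- j-fold Dirichlet convolution power of the constant function 1 (onePow 0 = ε). -/
noncomputable def onePow : ℕ → ℕ → ℂ
  | 0, n => if n = 1 then 1 else 0
  | (j + 1), n => ∑ d ∈ n.divisors, onePow j d

open ArithmeticFunction
open scoped ArithmeticFunction.zeta

lemma kappa_eq (x : ℂ) (n : ℕ) :
    kappa x n = (n : ℂ) ^ x + ∑ d ∈ n.properDivisors, kappa x d := by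
  rw [kappa]
  congr 1
  exact Finset.sum_attach _ _

noncomputable def Kf (x : ℂ) : ArithmeticFunction ℂ :=
  ⟨fun n => if n = 0 then 0 else kappa x n, rfl⟩

noncomputable def Px (x : ℂ) : ArithmeticFunction ℂ :=
  ⟨fun n => if n = 0 then 0 else (n : ℂ) ^ x, rfl⟩

lemma Kf_apply (x : ℂ) {n : ℕ} (hn : n ≠ 0) : Kf x n = kappa x n := if_neg hn
lemma Px_apply (x : ℂ) {n : ℕ} (hn : n ≠ 0) : Px x n = (n : ℂ) ^ x := if_neg hn

lemma onePow_eq (j n : ℕ) : onePow j n = ((ζ : ArithmeticFunction ℂ) ^ j) n := by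
  induction j generalizing n with
  | zero => simp [onePow, ArithmeticFunction.one_apply]
  | succ j ih =>
      rw [onePow, pow_succ, mul_comm, coe_zeta_mul_apply]
      exact Finset.sum_congr rfl fun d _ => ih d

lemma key (x : ℂ) :
    (2 : ArithmeticFunction ℂ) * Kf x = Px x + (ζ : ArithmeticFunction ℂ) * Kf x := by
  ext n
  rcases eq_or_ne n 0 with rfl | hn
  · simp
  · rw [two_mul, ArithmeticFunction.add_apply, ArithmeticFunction.add_apply, coe_zeta_mul_apply, Kf_apply x hn, Px_apply x hn]
    have h1 : ∑ d ∈ n.divisors, Kf x d = ∑ d ∈ n.divisors, kappa x d :=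
      Finset.sum_congr rfl fun d hd => Kf_apply x (Nat.pos_of_mem_divisors hd).ne'
    rw [h1, ← Nat.insert_self_properDivisors hn,
      Finset.sum_insert Nat.self_notMem_properDivisors, kappa_eq x n]
    ring

lemma two_mul_apply (f : ArithmeticFunction ℂ) (n : ℕ) :
    ((2 : ArithmeticFunction ℂ) * f) n = 2 * f n := by
  rw [two_mul, ArithmeticFunction.add_apply]; ring

lemma key_pow (x : ℂ) (j n : ℕ) :
    2 * ((ζ : ArithmeticFunction ℂ) ^ j * Kf x) n =
      ((ζ : ArithmeticFunction ℂ) ^ j * Px x) n +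
      ((ζ : ArithmeticFunction ℂ) ^ (j + 1) * Kf x) n := by
  have h : (ζ : ArithmeticFunction ℂ) ^ j * ((2 : ArithmeticFunction ℂ) * Kf x) =
      (ζ : ArithmeticFunction ℂ) ^ j * Px x +
      (ζ : ArithmeticFunction ℂ) ^ (j + 1) * Kf x := by
    rw [key, mul_add]; ring
  have h2 : (ζ : ArithmeticFunction ℂ) ^ j * ((2 : ArithmeticFunction ℂ) * Kf x) =
      (2 : ArithmeticFunction ℂ) * ((ζ : ArithmeticFunction ℂ) ^ j * Kf x) := by ring
  rw [← two_mul_apply, ← h2, h, ArithmeticFunction.add_apply]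

lemma iter (x : ℂ) (m : ℕ) (hm : 1 ≤ m) (n : ℕ) (hn : n ≠ 0) :
    kappa x n =
      (∑ j ∈ Finset.range m, ((ζ : ArithmeticFunction ℂ) ^ j * Px x) n / 2 ^ (j + 1)) +
      ((ζ : ArithmeticFunction ℂ) ^ m * Kf x) n / 2 ^ m := by
  induction m with
  | zero => exact absurd hm (by norm_num)
  | succ m ih =>
      rcases Nat.eq_zero_or_pos m with rfl | hm'
      · have h := key_pow x 0 n
        simp only [pow_zero, one_mul, zero_add, pow_one] at h
        rw [Kf_apply x hn] at h
        rw [Finset.range_one, Finset.sum_singleton, pow_zero, one_mul, pow_one, pow_one]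
        linear_combination h / 2
      · rw [ih hm', Finset.sum_range_succ]
        have h := key_pow x m n
        have h2 : ((ζ : ArithmeticFunction ℂ) ^ m * Kf x) n / 2 ^ m =
            ((ζ : ArithmeticFunction ℂ) ^ m * Px x) n / 2 ^ (m + 1) +
            ((ζ : ArithmeticFunction ℂ) ^ (m + 1) * Kf x) n / 2 ^ (m + 1) := by
          linear_combination h / 2 ^ (m + 1)
        rw [h2]; ring

theorem stmt18 (x : ℂ) (m : ℕ) (hm : 1 ≤ m) (n : ℕ) (hn : 1 ≤ n)
    (hnm : n ≤ 2 ^ m - 1) :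
    kappa x n =
      (∑ j ∈ Finset.range m,
        (∑ d ∈ n.divisors, onePow j d * ((n / d : ℕ) : ℂ) ^ x) / 2 ^ (j + 1)) +
      (∑ d ∈ n.divisors, onePow m d * kappa x (n / d)) / 2 ^ m := by
  have hn0 : n ≠ 0 := by omega
  rw [iter x m hm n hn0]
  have hmul : ∀ (f g : ArithmeticFunction ℂ),
      (f * g) n = ∑ d ∈ n.divisors, f d * g (n / d) := by
    intro f g
    rw [mul_apply, ← Nat.sum_divisorsAntidiagonal (fun a b => f a * g b)]
  have hdvd : ∀ d ∈ n.divisors, n / d ≠ 0 := fun d hd =>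
    (Nat.div_pos (Nat.le_of_dvd (Nat.pos_of_ne_zero hn0) (Nat.dvd_of_mem_divisors hd))
      (Nat.pos_of_mem_divisors hd)).ne'
  congr 1
  · refine Finset.sum_congr rfl fun j _ => ?_
    rw [hmul]
    congr 1
    refine Finset.sum_congr rfl fun d hd => ?_
    rw [onePow_eq, Px_apply x (hdvd d hd)]
  · rw [hmul]
    congr 1
    refine Finset.sum_congr rfl fun d hd => ?_
    rw [onePow_eq, Kf_apply x (hdvd d hd)]
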